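/- Let δ ≥ 0 and let X be a geodesic metric space satisfying the 4δ-tripod condition. Let x, y ∈ X and let g₁ : [0,∞) → X and g₂ : [0,∞) → X be geodesic rays with g₁(0) = x and g₂(0) = y such that (g₁(s)|g₂(s))_x → ∞ as s → ∞ (i.e. the two rays converge to the same point of the Gromov boundary). Then for every t ≥ 0 one has d(g₁(t), g₂(t)) ≤ 3·d(x,y) + 8δ. -/

import Mathlib

open Filter MeasureTheory Set

/-- `g` restricted to `s ⊆ ℝ` is an isometric (geodesic) parametrization. -/
def IsGeodesicOn {X : Type*} [MetricSpace X] (g : ℝ → X) (s : Set ℝ) : Prop :=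
  ∀ u ∈ s, ∀ v ∈ s, dist (g u) (g v) = |u - v|

/-- A geodesic from `x` to `y`, parametrized by arclength on `[0, dist x y]`. -/
def GeodesicFromTo {X : Type*} [MetricSpace X] (g : ℝ → X) (x y : X) : Prop :=
  IsGeodesicOn g (Set.Icc 0 (dist x y)) ∧ g 0 = x ∧ g (dist x y) = y

/-- `X` is a geodesic metric space: every pair of points is joined by a geodesic. -/
def GeodesicSpace (X : Type*) [MetricSpace X] : Prop :=
  ∀ x y : X, ∃ g : ℝ → X, GeodesicFromTo g x y

/-- The Gromov product `(x|y)_p` of `x` and `y` with basepoint `p`. -/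
noncomputable def gromov {X : Type*} [MetricSpace X] (p x y : X) : ℝ :=
  (dist x p + dist y p - dist x y) / 2

/-- The `4δ`-tripod condition: two geodesics emanating from a common point `x` stay
within `4δ` of each other up to the Gromov product `(y|z)_x`. -/
def TripodCond (X : Type*) [MetricSpace X] (δ : ℝ) : Prop :=
  ∀ x y z : X, ∀ g g' : ℝ → X, GeodesicFromTo g x y → GeodesicFromTo g' x z →
    ∀ r : ℝ, 0 ≤ r → r ≤ gromov x y z → dist (g r) (g' r) ≤ 4 * δ

/-- Theorem: two geodesic rays converging to the same Gromov boundary point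
fellow-travel with error `3·d(x,y) + 8δ`. -/
theorem statement6 {X : Type*} [MetricSpace X] (δ : ℝ) (hδ : 0 ≤ δ)
    (hgeo : GeodesicSpace X) (htri : TripodCond X δ)
    (x y : X) (g₁ g₂ : ℝ → X)
    (hg₁ : IsGeodesicOn g₁ (Set.Ici 0)) (hg₁0 : g₁ 0 = x)
    (hg₂ : IsGeodesicOn g₂ (Set.Ici 0)) (hg₂0 : g₂ 0 = y)
    (hconv : Filter.Tendsto (fun s : ℝ => gromov x (g₁ s) (g₂ s)) atTop atTop)
    (t : ℝ) (ht : 0 ≤ t) :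
    dist (g₁ t) (g₂ t) ≤ 3 * dist x y + 8 * δ := by
  have hD : 0 ≤ dist x y := dist_nonneg
  by_cases htD : t ≤ dist x y
  · -- trivial case: d(g₁ t, g₂ t) ≤ t + D + t ≤ 3D
    have h1 : dist (g₁ t) x = t := by
      rw [← hg₁0, hg₁ t ht 0 Set.self_mem_Ici]
      rw [abs_of_nonneg (by linarith)]; ring
    have h2 : dist y (g₂ t) = t := by
      rw [← hg₂0, hg₂ 0 Set.self_mem_Ici t ht, abs_of_nonpos (by linarith)]; ring
    calc dist (g₁ t) (g₂ t) ≤ dist (g₁ t) x + dist x (g₂ t) := dist_triangle _ _ _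
      _ ≤ dist (g₁ t) x + (dist x y + dist y (g₂ t)) :=
          add_le_add_right (dist_triangle _ _ _) _
      _ = t + dist x y + t := by rw [h1, h2]; ring
      _ ≤ 3 * dist x y + 8 * δ := by linarith
  · push_neg at htD
    -- choose s large
    obtain ⟨s, hs1, hs2⟩ :=
      ((hconv.eventually_ge_atTop (t + dist x y)).and
        (eventually_ge_atTop (t + dist x y))).exists
    have hs0 : 0 ≤ s := le_trans (by linarith) hs2
    have hxa : dist x (g₁ s) = s := by
      rw [← hg₁0, hg₁ 0 Set.self_mem_Ici s hs0, abs_of_nonpos (by linarith)]; ring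
    have hyb : dist y (g₂ s) = s := by
      rw [← hg₂0, hg₂ 0 Set.self_mem_Ici s hs0, abs_of_nonpos (by linarith)]; ring
    set b := g₂ s with hb
    set d := dist x b with hd
    have hd0 : 0 ≤ d := dist_nonneg
    have hdlb : s - dist x y ≤ d := by
      have := dist_triangle y x b
      rw [hyb, dist_comm y x] at this; linarith
    have hdub : d ≤ dist x y + s := by
      have := dist_triangle x y b
      rw [hyb] at this; linarith
    -- geodesic h from x to b
    obtain ⟨h, hh⟩ := hgeo x b
    -- first tripod application: g₁ and h from x, up to (g₁ s | b)_x
    have hgeo1 : GeodesicFromTo g₁ x (g₁ s) := by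
      refine ⟨fun u hu v hv => hg₁ u hu.1 v hv.1, hg₁0, ?_⟩
      rw [hxa]
    have key1 : dist (g₁ t) (h t) ≤ 4 * δ := by
      refine htri x (g₁ s) b g₁ h hgeo1 hh t ht ?_
      have : t + dist x y ≤ gromov x (g₁ s) b := hs1
      linarith
    -- second tripod application at basepoint b
    have hrevh : GeodesicFromTo (fun u => h (d - u)) b x := by
      obtain ⟨hhg, hh0, hhd⟩ := hh
      refine ⟨fun u hu v hv => ?_, ?_, ?_⟩
      · rw [dist_comm b x] at hu hv
        rw [hhg (d - u) ⟨by linarith [hu.2], by linarith [hu.1]⟩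
            (d - v) ⟨by linarith [hv.2], by linarith [hv.1]⟩]
        rw [show d - u - (d - v) = -(u - v) by ring, abs_neg]
      · simpa using hhd
      · rw [dist_comm b x, ← hd]; simpa using hh0
    have hrevg₂ : GeodesicFromTo (fun u => g₂ (s - u)) b y := by
      have hby : dist b y = s := by rw [dist_comm, hyb]
      refine ⟨fun u hu v hv => ?_, ?_, ?_⟩
      · rw [hby] at hu hv
        rw [hg₂ (s - u) (Set.mem_Ici.mpr (by linarith [hu.2])) (s - v) (Set.mem_Ici.mpr (by linarith [hv.2]))]
        rw [show s - u - (s - v) = -(u - v) by ring, abs_neg]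
      · simp [hb]
      · rw [hby]; simpa using hg₂0
    have hrd : 0 ≤ d - t := by linarith
    have key2 : dist (h t) (g₂ (s - (d - t))) ≤ 4 * δ := by
      have := htri b x y _ _ hrevh hrevg₂ (d - t) hrd ?_
      · simpa using this
      · -- d - t ≤ (d(x,b) + d(y,b) - d(x,y))/2
        have hgr : gromov b x y = (d + s - dist x y) / 2 := by
          unfold gromov
          rw [← hd, hyb]
        rw [hgr]; linarith
    have key3 : dist (g₂ (s - (d - t))) (g₂ t) ≤ dist x y := by
      rw [hg₂ (s - (d - t)) (Set.mem_Ici.mpr (by linarith)) t ht]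
      rw [show s - (d - t) - t = s - d by ring]
      rw [abs_sub_le_iff]; constructor <;> linarith
    calc dist (g₁ t) (g₂ t)
        ≤ dist (g₁ t) (h t) + dist (h t) (g₂ (s - (d - t))) +
            dist (g₂ (s - (d - t))) (g₂ t) := dist_triangle4 _ _ _ _
      _ ≤ 4 * δ + 4 * δ + dist x y := by gcongr
      _ ≤ 3 * dist x y + 8 * δ := by linarith
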